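/- arXiv:1808.02691 — 3 statements merged into one kernel-verified Lean document; each statement's English description precedes it below -/
import Mathlib

section
/- Let Ω be a periodic orbit with basin of attraction A(Ω), and assume there exist a compact positively invariant set U with Ω ⊆ int(U) and U ⊆ A(Ω) and constants C, κ > 0 such that for every y ∈ U and every solution φ of φ̇(t) = Df(S_t y)φ(t) one has ‖P_{S_t y} φ(t)‖ ≤ C e^{−κt} ‖P_y φ(0)‖ for all t ≥ 0. Let B : A(Ω) → 𝕊ⁿ be continuous. Fix x ∈ A(Ω) and θ₀ > 0 such that S_θ x is defined for all θ ≥ −θ₀. Then there exists c > 0 such that for all |θ| ≤ θ₀ and all τ ≥ 0: ‖Φ(τ,0;S_θ x)^T P_{S_{τ+θ} x}^T B(S_{τ+θ} x) P_{S_{τ+θ} x} Φ(τ,0;S_θ x)‖ ≤ c e^{−2κτ}. -/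
open Matrix Set Filter MeasureTheory

/-- Euclidean norm of a vector in `ℝⁿ`. -/
noncomputable def euclNorm {n : ℕ} (v : Fin n → ℝ) : ℝ := Real.sqrt (∑ i, v i ^ 2)

/-- Operator norm of a matrix induced by the Euclidean norm. -/
noncomputable def opn {n : ℕ} (A : Matrix (Fin n) (Fin n) ℝ) : ℝ :=
  ‖Matrix.toEuclideanCLM (𝕜 := ℝ) A‖

/-- The projection `P_x = I - f(x)f(x)ᵀ/‖f(x)‖²` onto the hyperplane perpendicular to `f(x)`. -/
noncomputable def Pm {n : ℕ} (f : (Fin n → ℝ) → Fin n → ℝ) (x : Fin n → ℝ) :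
    Matrix (Fin n) (Fin n) ℝ :=
  1 - (euclNorm (f x) ^ 2)⁻¹ • Matrix.vecMulVec (f x) (f x)

/-- The differential operator
`LM(x) = M′(x) + Df(x)ᵀM(x) + M(x)Df(x) - M(x)f(x)f(x)ᵀ(Df(x)+Df(x)ᵀ)/‖f(x)‖²
  - (Df(x)+Df(x)ᵀ)f(x)f(x)ᵀM(x)/‖f(x)‖²`,
where the orbital derivative `M′(x)` has entries `∇M_ij(x) ⋅ f(x)`. -/
noncomputable def LMop {n : ℕ} (f : (Fin n → ℝ) → Fin n → ℝ)
    (Df M : (Fin n → ℝ) → Matrix (Fin n) (Fin n) ℝ) (x : Fin n → ℝ) :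
    Matrix (Fin n) (Fin n) ℝ :=
  (Matrix.of fun i j => fderiv ℝ (fun y => M y i j) x (f x))
    + (Df x)ᵀ * M x + M x * Df x
    - (euclNorm (f x) ^ 2)⁻¹ • (M x * Matrix.vecMulVec (f x) (f x) * (Df x + (Df x)ᵀ))
    - (euclNorm (f x) ^ 2)⁻¹ • ((Df x + (Df x)ᵀ) * Matrix.vecMulVec (f x) (f x) * M x)
/-- Euclidean distance from a point to a set. -/
noncomputable def sdist {n : ℕ} (x : Fin n → ℝ) (A : Set (Fin n → ℝ)) : ℝ :=
  ⨅ y : A, euclNorm (x - (y : Fin n → ℝ))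

/-- The periodic orbit `Ω = {S_t p : t ∈ [0,T]}`. -/
def orbitSet {n : ℕ} (S : ℝ → (Fin n → ℝ) → Fin n → ℝ) (p : Fin n → ℝ) (T : ℝ) :
    Set (Fin n → ℝ) :=
  {y | ∃ t ∈ Set.Icc (0 : ℝ) T, y = S t p}

/-- `Ω` is a periodic orbit: `Ω = {S_t p : t ∈ [0,T]}` with `S_T p = p`, `T > 0`, `f(p) ≠ 0`. -/
def IsPeriodicOrbit {n : ℕ} (S : ℝ → (Fin n → ℝ) → Fin n → ℝ)
    (f : (Fin n → ℝ) → Fin n → ℝ) (Ω : Set (Fin n → ℝ)) : Prop :=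
  ∃ p T, 0 < T ∧ S T p = p ∧ f p ≠ 0 ∧ Ω = orbitSet S p T

/-- Exponential stability of `Ω`: there are `δ, C, μ > 0` such that `dist(x,Ω) ≤ δ` implies
`dist(S_t x, Ω) ≤ C e^{-μ t} dist(x,Ω)` for all `t ≥ 0`. -/
def ExpStable {n : ℕ} (S : ℝ → (Fin n → ℝ) → Fin n → ℝ) (Ω : Set (Fin n → ℝ)) : Prop :=
  ∃ δ > (0:ℝ), ∃ C > (0:ℝ), ∃ μ > (0:ℝ), ∀ x, sdist x Ω ≤ δ →
    ∀ t ≥ (0:ℝ), sdist (S t x) Ω ≤ C * Real.exp (-μ * t) * sdist x Ω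

/-- The basin of attraction `A(Ω) = {x : dist(S_t x, Ω) → 0 as t → ∞}`. -/
def basin {n : ℕ} (S : ℝ → (Fin n → ℝ) → Fin n → ℝ) (Ω : Set (Fin n → ℝ)) :
    Set (Fin n → ℝ) :=
  {x | Tendsto (fun t => sdist (S t x) Ω) atTop (nhds 0)}


lemma enorm_nonneg {n : ℕ} (v : Fin n → ℝ) : 0 ≤ euclNorm v := Real.sqrt_nonneg _

lemma enorm_eq {n : ℕ} (v : Fin n → ℝ) :
    euclNorm v = ‖(WithLp.equiv 2 (Fin n → ℝ)).symm v‖ := by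
  simp only [EuclideanSpace.norm_eq, WithLp.equiv_symm_apply, PiLp.toLp_apply, Real.norm_eq_abs, sq_abs, euclNorm]

lemma enorm_sq {n : ℕ} (v : Fin n → ℝ) : euclNorm v ^ 2 = ∑ i, v i ^ 2 := by
  rw [euclNorm, Real.sq_sqrt (Finset.sum_nonneg fun i _ => sq_nonneg _)]

lemma enorm_sq_eq_dot {n : ℕ} (v : Fin n → ℝ) : euclNorm v ^ 2 = v ⬝ᵥ v := by
  rw [enorm_sq, dotProduct]; exact Finset.sum_congr rfl fun i _ => (sq (v i)).symm ▸ by ring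

lemma enorm_mulVec_le {n : ℕ} (A : Matrix (Fin n) (Fin n) ℝ) (v : Fin n → ℝ) :
    euclNorm (A.mulVec v) ≤ opn A * euclNorm v := by
  rw [enorm_eq, enorm_eq]
  exact ContinuousLinearMap.le_opNorm (Matrix.toEuclideanCLM (𝕜 := ℝ) A) (WithLp.toLp 2 v)

lemma opn_le_of_bound {n : ℕ} (A : Matrix (Fin n) (Fin n) ℝ) (c : ℝ) (hc : 0 ≤ c)
    (h : ∀ v, euclNorm (A.mulVec v) ≤ c * euclNorm v) : opn A ≤ c := by
  refine ContinuousLinearMap.opNorm_le_bound _ hc fun x => ?_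
  have := h (WithLp.equiv 2 (Fin n → ℝ) x)
  rw [enorm_eq, enorm_eq, (WithLp.equiv 2 (Fin n → ℝ)).symm_apply_apply] at this
  exact this

lemma dot_le_enorm {n : ℕ} (v w : Fin n → ℝ) : v ⬝ᵥ w ≤ euclNorm v * euclNorm w := by
  have h := real_inner_le_norm ((WithLp.equiv 2 (Fin n → ℝ)).symm v)
    ((WithLp.equiv 2 (Fin n → ℝ)).symm w)
  rw [← enorm_eq, ← enorm_eq] at h
  refine le_trans (le_of_eq ?_) h
  rw [PiLp.inner_apply, dotProduct]
  exact Finset.sum_congr rfl fun i _ => by simp [RCLike.inner_apply, mul_comm]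

lemma abs_le_enorm {n : ℕ} (v : Fin n → ℝ) (i : Fin n) : |v i| ≤ euclNorm v := by
  rw [euclNorm, ← Real.sqrt_sq_eq_abs]
  exact Real.sqrt_le_sqrt (Finset.single_le_sum (fun j _ => sq_nonneg (v j)) (Finset.mem_univ i))

lemma norm_le_enorm {n : ℕ} (v : Fin n → ℝ) : ‖v‖ ≤ euclNorm v := by
  refine (pi_norm_le_iff_of_nonneg (enorm_nonneg v)).2 fun i => ?_
  rw [Real.norm_eq_abs]; exact abs_le_enorm v i

lemma enorm_le_sqrt_norm {n : ℕ} (v : Fin n → ℝ) : euclNorm v ≤ Real.sqrt n * ‖v‖ := by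
  rw [euclNorm, ← Real.sqrt_sq (norm_nonneg v), ← Real.sqrt_mul (by positivity)]
  refine Real.sqrt_le_sqrt ?_
  calc ∑ i, v i ^ 2 ≤ ∑ _i : Fin n, ‖v‖ ^ 2 := by
        refine Finset.sum_le_sum fun i _ => ?_
        have : |v i| ≤ ‖v‖ := by rw [← Real.norm_eq_abs]; exact norm_le_pi_norm v i
        calc v i ^ 2 = |v i| ^ 2 := (sq_abs _).symm
          _ ≤ ‖v‖ ^ 2 := pow_le_pow_left₀ (abs_nonneg _) this 2
    _ = n * ‖v‖ ^ 2 := by simp [Finset.sum_const, mul_comm]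

lemma vecMulVec_mulVec' {n : ℕ} (u w v : Fin n → ℝ) :
    (Matrix.vecMulVec u w).mulVec v = (w ⬝ᵥ v) • u := by
  funext i
  simp [Matrix.mulVec, dotProduct, Matrix.vecMulVec_apply, Finset.mul_sum, mul_assoc,
    mul_comm, mul_left_comm]

lemma enorm_Pm_mulVec_le {n : ℕ} (f : (Fin n → ℝ) → Fin n → ℝ) (z : Fin n → ℝ)
    (v : Fin n → ℝ) : euclNorm ((Pm f z).mulVec v) ≤ euclNorm v := by
  set u := f z with hu
  have key : ((Pm f z).mulVec v) ⬝ᵥ ((Pm f z).mulVec v) ≤ v ⬝ᵥ v := by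
    have hPv : (Pm f z).mulVec v = v - (euclNorm u ^ 2)⁻¹ • ((u ⬝ᵥ v) • u) := by
      rw [Pm, Matrix.sub_mulVec, Matrix.one_mulVec, Matrix.smul_mulVec,
        vecMulVec_mulVec']
    rcases eq_or_ne u 0 with h0 | h0
    · simp [hPv, h0]
    · have huu : u ⬝ᵥ u = euclNorm u ^ 2 := (enorm_sq_eq_dot u).symm
      have hupos : 0 < euclNorm u ^ 2 := by
        rw [enorm_sq]
        have : ∃ i, u i ≠ 0 := Function.ne_iff.1 h0
        obtain ⟨i, hi⟩ := this
        exact Finset.sum_pos' (fun j _ => sq_nonneg _)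
          ⟨i, Finset.mem_univ i, by positivity⟩
      set a := (euclNorm u ^ 2)⁻¹ with ha
      have ha0 : 0 ≤ a := by positivity
      rw [hPv]
      have expand : (v - a • ((u ⬝ᵥ v) • u)) ⬝ᵥ (v - a • ((u ⬝ᵥ v) • u))
          = v ⬝ᵥ v - 2 * a * (u ⬝ᵥ v) ^ 2 + a ^ 2 * (u ⬝ᵥ v) ^ 2 * (u ⬝ᵥ u) := by
        simp only [sub_dotProduct, dotProduct_sub, smul_dotProduct,
          dotProduct_smul, smul_eq_mul]
        rw [dotProduct_comm v u]
        ring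
      rw [expand, huu]
      have : a ^ 2 * (u ⬝ᵥ v) ^ 2 * euclNorm u ^ 2 = a * (u ⬝ᵥ v) ^ 2 := by
        rw [ha]; field_simp
      rw [this]
      nlinarith [sq_nonneg (u ⬝ᵥ v), mul_nonneg ha0 (sq_nonneg (u ⬝ᵥ v))]
  rw [euclNorm, euclNorm]
  refine Real.sqrt_le_sqrt ?_
  have h1 := enorm_sq_eq_dot ((Pm f z).mulVec v)
  have h2 := enorm_sq_eq_dot v
  rw [enorm_sq] at h1 h2
  rw [h1, h2]; exact key

lemma quad_bound {n : ℕ} (G A : Matrix (Fin n) (Fin n) ℝ) (g d : ℝ)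
    (hg : 0 ≤ g) (hd : 0 ≤ d)
    (hA : ∀ w, euclNorm (A.mulVec w) ≤ d * euclNorm w)
    (hG : ∀ u, euclNorm (G.mulVec u) ≤ g * euclNorm u) (v : Fin n → ℝ) :
    euclNorm ((Aᵀ * G * A).mulVec v) ≤ g * d ^ 2 * euclNorm v := by
  set m := (Aᵀ * G * A).mulVec v with hm
  have hm' : m = Aᵀ.mulVec (G.mulVec (A.mulVec v)) := by
    rw [hm, Matrix.mulVec_mulVec, Matrix.mulVec_mulVec]
  have key : euclNorm m ^ 2 ≤ g * d ^ 2 * euclNorm v * euclNorm m := by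
    have h1 : euclNorm m ^ 2 = m ⬝ᵥ m := enorm_sq_eq_dot m
    have h2 : m ⬝ᵥ m = (G.mulVec (A.mulVec v)) ⬝ᵥ (A.mulVec m) := by
      nth_rewrite 1 [hm']
      rw [Matrix.mulVec_transpose, ← Matrix.dotProduct_mulVec]
    have h3 : (G.mulVec (A.mulVec v)) ⬝ᵥ (A.mulVec m)
        ≤ euclNorm (G.mulVec (A.mulVec v)) * euclNorm (A.mulVec m) := dot_le_enorm _ _
    have h4 : euclNorm (G.mulVec (A.mulVec v)) ≤ g * (d * euclNorm v) :=
      le_trans (hG _) (mul_le_mul_of_nonneg_left (hA v) hg)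
    have h5 : euclNorm (A.mulVec m) ≤ d * euclNorm m := hA m
    calc euclNorm m ^ 2 = (G.mulVec (A.mulVec v)) ⬝ᵥ (A.mulVec m) := by rw [h1, h2]
      _ ≤ euclNorm (G.mulVec (A.mulVec v)) * euclNorm (A.mulVec m) := h3
      _ ≤ (g * (d * euclNorm v)) * (d * euclNorm m) := by
          exact mul_le_mul h4 h5 (enorm_nonneg _) (mul_nonneg hg (mul_nonneg hd (enorm_nonneg _)))
      _ = g * d ^ 2 * euclNorm v * euclNorm m := by ring
  rcases eq_or_lt_of_le (enorm_nonneg m) with h0 | h0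
  · rw [← h0]; exact mul_nonneg (mul_nonneg hg (pow_nonneg hd 2)) (enorm_nonneg v)
  · nlinarith [enorm_nonneg m]

lemma enorm_mulVec_le_entries {n : ℕ} (A : Matrix (Fin n) (Fin n) ℝ) (u : Fin n → ℝ) :
    euclNorm (A.mulVec u) ≤ (Real.sqrt n * ∑ i, ∑ j, |A i j|) * euclNorm u := by
  have hsum : 0 ≤ ∑ i, ∑ j, |A i j| :=
    Finset.sum_nonneg fun i _ => Finset.sum_nonneg fun j _ => abs_nonneg _
  have hcoord : ∀ i, |(A.mulVec u) i| ≤ (∑ i', ∑ j, |A i' j|) * euclNorm u := by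
    intro i
    calc |(A.mulVec u) i| = |∑ j, A i j * u j| := by rw [Matrix.mulVec, dotProduct]
      _ ≤ ∑ j, |A i j * u j| := Finset.abs_sum_le_sum_abs _ _
      _ ≤ ∑ j, |A i j| * euclNorm u := by
          refine Finset.sum_le_sum fun j _ => ?_
          rw [abs_mul]
          exact mul_le_mul_of_nonneg_left (abs_le_enorm u j) (abs_nonneg _)
      _ = (∑ j, |A i j|) * euclNorm u := (Finset.sum_mul _ _ _).symm
      _ ≤ (∑ i', ∑ j, |A i' j|) * euclNorm u := by
          refine mul_le_mul_of_nonneg_right ?_ (enorm_nonneg u)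
          exact Finset.single_le_sum (f := fun i' => ∑ j, |A i' j|)
            (fun i' _ => Finset.sum_nonneg fun j _ => abs_nonneg _) (Finset.mem_univ i)
  calc euclNorm (A.mulVec u) ≤ Real.sqrt n * ‖A.mulVec u‖ := enorm_le_sqrt_norm _
    _ ≤ Real.sqrt n * ((∑ i, ∑ j, |A i j|) * euclNorm u) := by
        refine mul_le_mul_of_nonneg_left ?_ (Real.sqrt_nonneg _)
        refine (pi_norm_le_iff_of_nonneg (mul_nonneg hsum (enorm_nonneg u))).2 fun i => ?_
        rw [Real.norm_eq_abs]; exact hcoord i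
    _ = (Real.sqrt n * ∑ i, ∑ j, |A i j|) * euclNorm u := by ring


/-- Lemma 3.6: if the projected solutions of the variational equation
decay exponentially on a compact positively invariant neighborhood `U` of `Ω` inside `A(Ω)`,
and `B` is continuous on `A(Ω)`, then for fixed `x ∈ A(Ω)` and `θ₀ > 0` there is `c > 0`
with `‖Φ(τ,0;S_θ x)ᵀ P_{S_{τ+θ} x}ᵀ B(S_{τ+θ} x) P_{S_{τ+θ} x} Φ(τ,0;S_θ x)‖ ≤ c e^{−2κτ}`
for all `|θ| ≤ θ₀` and `τ ≥ 0`. -/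
theorem stmt6 {n : ℕ} (f : (Fin n → ℝ) → Fin n → ℝ)
    (Df : (Fin n → ℝ) → Matrix (Fin n) (Fin n) ℝ)
    (hf : ContDiff ℝ 1 f)
    (hDf : ∀ y, HasFDerivAt f (LinearMap.toContinuousLinearMap ((Df y).mulVecLin)) y)
    -- `S` is the flow of `ẋ = f(x)`
    (S : ℝ → (Fin n → ℝ) → Fin n → ℝ)
    (hS0 : ∀ x, S 0 x = x)
    (hS : ∀ x t, HasDerivAt (fun τ => S τ x) (f (S t x)) t)
    (hSadd : ∀ s t x, S (s + t) x = S s (S t x))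
    -- `Φ t x = Φ(t,0;x)` is the principal fundamental matrix solution of the variational eq.
    (Φ : ℝ → (Fin n → ℝ) → Matrix (Fin n) (Fin n) ℝ)
    (hΦ0 : ∀ x, Φ 0 x = 1)
    (hΦ : ∀ x t i j, HasDerivAt (fun τ => Φ τ x i j) ((Df (S t x) * Φ t x) i j) t)
    -- `Ω` is a periodic orbit
    (p : Fin n → ℝ) (T : ℝ) (hT : 0 < T) (hpT : S T p = p) (hfp : f p ≠ 0)
    (Ω : Set (Fin n → ℝ)) (hΩ : Ω = orbitSet S p T)
    -- `U` is a compact positively invariant neighborhood of `Ω` inside `A(Ω)`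
    (U : Set (Fin n → ℝ)) (hUcomp : IsCompact U)
    (hUinv : ∀ y ∈ U, ∀ t ≥ (0:ℝ), S t y ∈ U)
    (hUnbhd : Ω ⊆ interior U) (hUbasin : U ⊆ basin S Ω)
    -- the exponential decay of projected solutions of the variational equation on `U`
    (C κ : ℝ) (hC : 0 < C) (hκ : 0 < κ)
    (hdecay : ∀ y ∈ U, ∀ φ : ℝ → Fin n → ℝ,
      (∀ t ≥ (0:ℝ), HasDerivWithinAt φ ((Df (S t y)).mulVec (φ t)) (Set.Ici 0) t) →
      ∀ t ≥ (0:ℝ), euclNorm ((Pm f (S t y)).mulVec (φ t)) ≤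
        C * Real.exp (-κ * t) * euclNorm ((Pm f y).mulVec (φ 0)))
    -- `B` is continuous and symmetric-matrix-valued on `A(Ω)`
    (B : (Fin n → ℝ) → Matrix (Fin n) (Fin n) ℝ)
    (hBc : ∀ i j, ContinuousOn (fun y => B y i j) (basin S Ω))
    (hBsym : ∀ y ∈ basin S Ω, (B y)ᵀ = B y)
    -- fix `x ∈ A(Ω)` and `θ₀ > 0`
    (x : Fin n → ℝ) (hx : x ∈ basin S Ω) (θ₀ : ℝ) (hθ₀ : 0 < θ₀) :
    ∃ c > (0:ℝ), ∀ θ : ℝ, |θ| ≤ θ₀ → ∀ τ ≥ (0:ℝ),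
      opn ((Φ τ (S θ x))ᵀ *
          ((Pm f (S (τ + θ) x))ᵀ * B (S (τ + θ) x) * Pm f (S (τ + θ) x)) *
          Φ τ (S θ x)) ≤ c * Real.exp (-2 * κ * τ) := by
    classical
  have hScont : ∀ z, Continuous fun t => S t z := fun z =>
    continuous_iff_continuousAt.2 fun t => (hS z t).continuousAt
  -- Ω is compact and nonempty
  have hpΩ : p ∈ Ω := by
    rw [hΩ]; exact ⟨0, ⟨le_refl 0, le_of_lt hT⟩, (hS0 p).symm⟩
  have hΩc : IsCompact Ω := by
    have : Ω = (fun t => S t p) '' Icc 0 T := by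
      rw [hΩ]; ext y; constructor
      · rintro ⟨t, ht, rfl⟩; exact ⟨t, ht, rfl⟩
      · rintro ⟨t, ht, rfl⟩; exact ⟨t, ht, rfl⟩
    rw [this]; exact isCompact_Icc.image (hScont p)
  obtain ⟨ε, hε, hthick⟩ := hΩc.exists_thickening_subset_open isOpen_interior hUnbhd
  haveI : Nonempty Ω := ⟨⟨p, hpΩ⟩⟩
  -- points with small sdist to Ω lie in U
  have hmemU : ∀ z, sdist z Ω < ε → z ∈ U := by
    intro z hz
    obtain ⟨y, hy⟩ := exists_lt_of_ciInf_lt hz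
    have hd : dist z (y : Fin n → ℝ) < ε :=
      lt_of_le_of_lt (by rw [dist_eq_norm]; exact norm_le_enorm _) hy
    exact interior_subset (hthick (Metric.mem_thickening_iff.2 ⟨y, y.2, hd⟩))
  -- the basin is invariant
  have hbasin_shift : ∀ t : ℝ, S t x ∈ basin S Ω := by
    intro t
    have hx' : Tendsto (fun s => sdist (S s x) Ω) atTop (nhds 0) := hx
    have heq : (fun s => sdist (S s (S t x)) Ω) =
        (fun r => sdist (S r x) Ω) ∘ fun s => s + t := by
      funext s; simp only [Function.comp]; rw [← hSadd]
    show Tendsto (fun s => sdist (S s (S t x)) Ω) atTop (nhds 0)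
    rw [heq]
    exact hx'.comp (tendsto_atTop_add_const_right atTop t tendsto_id)
  -- eventually the trajectory of x is in U
  obtain ⟨t₂', ht₂'⟩ := eventually_atTop.1 ((tendsto_order.1 hx).2 ε hε)
  set t₂ : ℝ := max t₂' 0 with ht₂def
  have ht₂0 : 0 ≤ t₂ := le_max_right _ _
  have hU_mem : ∀ t, t₂ ≤ t → S t x ∈ U := fun t ht =>
    hmemU _ (ht₂' t (le_trans (le_max_left _ _) ht))
  set tstar : ℝ := t₂ + θ₀ with htstar
  have htstar0 : 0 ≤ tstar := by positivity
  -- the compact trajectory piece K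
  set K : Set (Fin n → ℝ) := (fun t => S t x) '' Icc (-θ₀) (tstar + θ₀) with hKdef
  have hKc : IsCompact K := isCompact_Icc.image (hScont x)
  -- bound L on ‖Df‖ over K
  have hfdc : Continuous fun z => ‖fderiv ℝ f z‖ := (hf.continuous_fderiv one_ne_zero).norm
  obtain ⟨L, hL⟩ := hKc.exists_bound_of_continuousOn hfdc.continuousOn
  have hL' : ∀ z ∈ K, ‖fderiv ℝ f z‖ ≤ L := by
    intro z hz; have := hL z hz; rwa [norm_norm] at this
  have hxK : x ∈ K := ⟨0, ⟨by linarith, by linarith⟩, hS0 x⟩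
  have hL0 : 0 ≤ L := le_trans (norm_nonneg _) (hL' x hxK)
  have hDfb : ∀ z ∈ K, ∀ w, ‖(Df z).mulVec w‖ ≤ L * ‖w‖ := by
    intro z hz w
    have h1 : fderiv ℝ f z = LinearMap.toContinuousLinearMap ((Df z).mulVecLin) :=
      (hDf z).fderiv
    calc ‖(Df z).mulVec w‖ = ‖fderiv ℝ f z w‖ := by rw [h1]; rfl
      _ ≤ ‖fderiv ℝ f z‖ * ‖w‖ := (fderiv ℝ f z).le_opNorm w
      _ ≤ L * ‖w‖ := mul_le_mul_of_nonneg_right (hL' z hz) (norm_nonneg w)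
  -- derivative of t ↦ Φ t z *ᵥ v
  have hPhiDeriv : ∀ (z v : Fin n → ℝ) (t : ℝ),
      HasDerivAt (fun τ => (Φ τ z).mulVec v) ((Df (S t z)).mulVec ((Φ t z).mulVec v)) t := by
    intro z v t
    have h1 : HasDerivAt (fun τ => (Φ τ z).mulVec v) ((Df (S t z) * Φ t z).mulVec v) t := by
      rw [hasDerivAt_pi]
      intro i
      have h2 : ∀ τ, (Φ τ z).mulVec v i = ∑ j, Φ τ z i j * v j := fun τ => by
        rw [Matrix.mulVec, dotProduct]
      simp only [h2]
      have h3 : (Df (S t z) * Φ t z).mulVec v i = ∑ j, (Df (S t z) * Φ t z) i j * v j := by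
        rw [Matrix.mulVec, dotProduct]
      rw [h3]
      exact HasDerivAt.fun_sum fun j _ => (hΦ z t i j).mul_const (v j)
    rwa [← Matrix.mulVec_mulVec] at h1
  -- Grönwall estimate on [0, tstar]
  have hGron : ∀ θ : ℝ, |θ| ≤ θ₀ → ∀ v : Fin n → ℝ, ∀ t ∈ Icc (0:ℝ) tstar,
      ‖(Φ t (S θ x)).mulVec v‖ ≤ ‖v‖ * Real.exp (L * t) := by
    intro θ hθ v t ht
    obtain ⟨hθ1, hθ2⟩ := abs_le.1 hθ
    have hsK : ∀ s ∈ Icc (0:ℝ) tstar, S s (S θ x) ∈ K := by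
      intro s hs
      rw [← hSadd]
      exact ⟨s + θ, ⟨by linarith [hs.1], by linarith [hs.2]⟩, rfl⟩
    have hcont : ContinuousOn (fun τ => (Φ τ (S θ x)).mulVec v) (Icc 0 tstar) :=
      (continuous_iff_continuousAt.2 fun s => (hPhiDeriv _ v s).continuousAt).continuousOn
    have hderiv : ∀ s ∈ Ico (0:ℝ) tstar,
        HasDerivWithinAt (fun τ => (Φ τ (S θ x)).mulVec v)
          ((Df (S s (S θ x))).mulVec ((Φ s (S θ x)).mulVec v)) (Ici s) s :=
      fun s _ => (hPhiDeriv _ v s).hasDerivWithinAt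
    have ha : ‖(Φ (0:ℝ) (S θ x)).mulVec v‖ ≤ ‖v‖ := by
      rw [hΦ0, Matrix.one_mulVec]
    have hbound : ∀ s ∈ Ico (0:ℝ) tstar,
        ‖(Df (S s (S θ x))).mulVec ((Φ s (S θ x)).mulVec v)‖ ≤
          L * ‖(Φ s (S θ x)).mulVec v‖ + 0 := by
      intro s hs
      rw [add_zero]
      exact hDfb _ (hsK s ⟨hs.1, le_of_lt hs.2⟩) _
    have := norm_le_gronwallBound_of_norm_deriv_right_le hcont hderiv ha hbound t ht
    rwa [gronwallBound_ε0, sub_zero] at this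
  -- euclNorm version
  set E : ℝ := Real.sqrt n * Real.exp (L * tstar) with hEdef
  have hE0 : 0 ≤ E := by positivity
  have hE : ∀ θ : ℝ, |θ| ≤ θ₀ → ∀ v : Fin n → ℝ, ∀ t ∈ Icc (0:ℝ) tstar,
      euclNorm ((Φ t (S θ x)).mulVec v) ≤ E * euclNorm v := by
    intro θ hθ v t ht
    calc euclNorm ((Φ t (S θ x)).mulVec v) ≤ Real.sqrt n * ‖(Φ t (S θ x)).mulVec v‖ :=
          enorm_le_sqrt_norm _
      _ ≤ Real.sqrt n * (‖v‖ * Real.exp (L * t)) :=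
          mul_le_mul_of_nonneg_left (hGron θ hθ v t ht) (Real.sqrt_nonneg _)
      _ ≤ Real.sqrt n * (euclNorm v * Real.exp (L * tstar)) := by
          refine mul_le_mul_of_nonneg_left ?_ (Real.sqrt_nonneg _)
          refine mul_le_mul (norm_le_enorm v) (Real.exp_le_exp.2 ?_) (Real.exp_pos _).le
            (enorm_nonneg _)
          exact mul_le_mul_of_nonneg_left ht.2 hL0
      _ = E * euclNorm v := by rw [hEdef]; ring
  -- the main decay estimate for Pm * Φ
  set D : ℝ := (C + 1) * (E + 1) * Real.exp (κ * tstar) with hDdef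
  have hD0 : 0 < D := by positivity
  have hAdec : ∀ θ : ℝ, |θ| ≤ θ₀ → ∀ τ : ℝ, 0 ≤ τ → ∀ v : Fin n → ℝ,
      euclNorm ((Pm f (S (τ + θ) x) * Φ τ (S θ x)).mulVec v) ≤
        (D * Real.exp (-κ * τ)) * euclNorm v := by
    intro θ hθ τ hτ v
    obtain ⟨hθ1, hθ2⟩ := abs_le.1 hθ
    rw [← Matrix.mulVec_mulVec]
    rcases le_total τ tstar with hcase | hcase
    · have h1 : euclNorm ((Pm f (S (τ + θ) x)).mulVec ((Φ τ (S θ x)).mulVec v)) ≤ E * euclNorm v :=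
        le_trans (enorm_Pm_mulVec_le f _ _) (hE θ hθ v τ ⟨hτ, hcase⟩)
      refine le_trans h1 ?_
      refine mul_le_mul_of_nonneg_right ?_ (enorm_nonneg v)
      have hexp : Real.exp (κ * tstar) * Real.exp (-κ * τ) = Real.exp (κ * (tstar - τ)) := by
        rw [← Real.exp_add]; congr 1; ring
      have h2 : (1:ℝ) ≤ Real.exp (κ * (tstar - τ)) :=
        Real.one_le_exp (by nlinarith)
      calc E ≤ (C + 1) * (E + 1) * 1 := by nlinarith [mul_nonneg hC.le hE0]
        _ ≤ (C + 1) * (E + 1) * Real.exp (κ * (tstar - τ)) := by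
            have := mul_le_mul_of_nonneg_left h2 (show (0:ℝ) ≤ (C + 1) * (E + 1) by positivity)
            linarith
        _ = D * Real.exp (-κ * τ) := by rw [hDdef, ← hexp]; ring
    · -- τ ≥ tstar : use the decay hypothesis
      set s : ℝ := τ - tstar with hsdef
      have hs0 : 0 ≤ s := by simp [hsdef]; linarith
      set y : Fin n → ℝ := S (tstar + θ) x with hydef
      have hyU : y ∈ U := hU_mem (tstar + θ) (by rw [htstar]; linarith)
      set φ : ℝ → Fin n → ℝ := fun s' => (Φ (s' + tstar) (S θ x)).mulVec v with hφdef
      have hSy : ∀ t' : ℝ, S (t' + tstar) (S θ x) = S t' y := by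
        intro t'
        rw [hydef, hSadd tstar θ x]
        exact hSadd t' tstar (S θ x)
      have hφ' : ∀ t' ≥ (0:ℝ), HasDerivWithinAt φ ((Df (S t' y)).mulVec (φ t')) (Ici 0) t' := by
        intro t' _
        have h1 := hPhiDeriv (S θ x) v (t' + tstar)
        have h2 : HasDerivAt (fun s' : ℝ => s' + tstar) 1 t' := (hasDerivAt_id t').add_const _
        have h3 := HasDerivAt.scomp t' h1 h2
        rw [one_smul] at h3
        have h4 : (fun τ' => (Φ τ' (S θ x)).mulVec v) ∘ (fun s' : ℝ => s' + tstar) = φ := rfl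
        rw [h4, hSy t'] at h3
        exact h3.hasDerivWithinAt
      have hd := hdecay y hyU φ hφ' s hs0
      have hSsy : S s y = S (τ + θ) x := by
        have h5 : τ + θ = s + tstar + θ := by rw [hsdef]; ring
        rw [← hSy s, h5, hSadd (s + tstar) θ x]
      have hφs : φ s = (Φ τ (S θ x)).mulVec v := by
        rw [hφdef]
        simp only
        congr 2
        rw [hsdef]; ring
      have hφ0 : φ 0 = (Φ tstar (S θ x)).mulVec v := by
        rw [hφdef]; simp only [zero_add]
      rw [hSsy, hφs, hφ0] at hd
      have hrhs : euclNorm ((Pm f y).mulVec ((Φ tstar (S θ x)).mulVec v)) ≤ E * euclNorm v :=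
        le_trans (enorm_Pm_mulVec_le f _ _) (hE θ hθ v tstar ⟨htstar0, le_refl _⟩)
      have hexp : Real.exp (-κ * s) = Real.exp (κ * tstar) * Real.exp (-κ * τ) := by
        rw [← Real.exp_add]; congr 1; rw [hsdef]; ring
      calc euclNorm ((Pm f (S (τ + θ) x)).mulVec ((Φ τ (S θ x)).mulVec v))
          ≤ C * Real.exp (-κ * s) * euclNorm ((Pm f y).mulVec ((Φ tstar (S θ x)).mulVec v)) := hd
        _ ≤ C * Real.exp (-κ * s) * (E * euclNorm v) := by
            refine mul_le_mul_of_nonneg_left hrhs ?_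
            positivity
        _ = (C * E * Real.exp (κ * tstar)) * Real.exp (-κ * τ) * euclNorm v := by
            rw [hexp]; ring
        _ ≤ (D * Real.exp (-κ * τ)) * euclNorm v := by
            refine mul_le_mul_of_nonneg_right ?_ (enorm_nonneg v)
            refine mul_le_mul_of_nonneg_right ?_ (Real.exp_pos _).le
            rw [hDdef]
            nlinarith [Real.exp_pos (κ * tstar), hC.le, hE0]
  -- bound on B over the compact set K ∪ U
  set K2 : Set (Fin n → ℝ) := K ∪ U with hK2def
  have hK2c : IsCompact K2 := hKc.union hUcomp
  have hK2b : K2 ⊆ basin S Ω := by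
    refine union_subset ?_ hUbasin
    rintro z ⟨t, _, rfl⟩
    exact hbasin_shift t
  have hBcont : ContinuousOn (fun z => ∑ i, ∑ j, |B z i j|) K2 := by
    refine ContinuousOn.mono ?_ hK2b
    exact continuousOn_finset_sum _ fun i _ => continuousOn_finset_sum _ fun j _ => (hBc i j).abs
  obtain ⟨MB, hMB⟩ := hK2c.exists_bound_of_continuousOn hBcont
  have hMB' : ∀ z ∈ K2, ∑ i, ∑ j, |B z i j| ≤ MB := by
    intro z hz
    have := hMB z hz
    rwa [Real.norm_eq_abs, abs_of_nonneg
      (Finset.sum_nonneg fun i _ => Finset.sum_nonneg fun j _ => abs_nonneg _)] at this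
  set g : ℝ := Real.sqrt n * MB + 1 with hgdef
  have hMB0 : 0 ≤ Real.sqrt n * MB := by
    have hx2 : x ∈ K2 := Or.inl hxK
    have h1 : (0:ℝ) ≤ ∑ i, ∑ j, |B x i j| :=
      Finset.sum_nonneg fun i _ => Finset.sum_nonneg fun j _ => abs_nonneg _
    exact mul_nonneg (Real.sqrt_nonneg _) (le_trans h1 (hMB' x hx2))
  have hg0 : 0 < g := by positivity
  have hGbound : ∀ z ∈ K2, ∀ u : Fin n → ℝ, euclNorm ((B z).mulVec u) ≤ g * euclNorm u := by
    intro z hz u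
    refine le_trans (enorm_mulVec_le_entries _ _) ?_
    refine mul_le_mul_of_nonneg_right ?_ (enorm_nonneg u)
    rw [hgdef]
    have := mul_le_mul_of_nonneg_left (hMB' z hz) (Real.sqrt_nonneg (n:ℝ))
    linarith
  -- conclusion
  refine ⟨g * D ^ 2, by positivity, ?_⟩
  intro θ hθ τ hτ
  obtain ⟨hθ1, hθ2⟩ := abs_le.1 hθ
  set z : Fin n → ℝ := S (τ + θ) x with hzdef
  have hzK2 : z ∈ K2 := by
    rcases le_total (τ + θ) (tstar + θ₀) with hc | hc
    · exact Or.inl ⟨τ + θ, ⟨by linarith, hc⟩, rfl⟩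
    · exact Or.inr (hU_mem (τ + θ) (by rw [htstar] at hc; linarith))
  have hMeq : (Φ τ (S θ x))ᵀ * ((Pm f z)ᵀ * B z * Pm f z) * Φ τ (S θ x) =
      (Pm f z * Φ τ (S θ x))ᵀ * B z * (Pm f z * Φ τ (S θ x)) := by
    simp only [Matrix.transpose_mul, Matrix.mul_assoc]
  rw [hMeq]
  have hq := quad_bound (B z) (Pm f z * Φ τ (S θ x)) g (D * Real.exp (-κ * τ))
    hg0.le (by positivity) (hAdec θ hθ τ hτ) (hGbound z hzK2)
  have hle := opn_le_of_bound _ (g * (D * Real.exp (-κ * τ)) ^ 2) (by positivity) hq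
  refine le_trans hle (le_of_eq ?_)
  have hexp2 : Real.exp (-κ * τ) ^ 2 = Real.exp (-2 * κ * τ) := by
    rw [sq, ← Real.exp_add]; congr 1; ring
  rw [mul_pow, hexp2]; ring
end

section
/- Let x ∈ ℝⁿ be such that the flow S_t x is defined and f(S_t x) ≠ 0 for all t ≥ 0, and define Ã(t,x) := Df(S_t x) − (f(S_t x) f(S_t x)^T/‖f(S_t x)‖²)(Df(S_t x)^T + Df(S_t x)). Then φ₀(t) := f(S_t x)/‖f(S_t x)‖² satisfies φ̇₀(t) = Ã(t,x) φ₀(t) for all t ≥ 0. -/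
open Matrix Set Filter MeasureTheory

/-- `φ₀(t) := f(S_t x)/‖f(S_t x)‖²` solves `φ̇₀(t) = Ã(t,x) φ₀(t)` where
`Ã(t,x) = Df(S_t x) − (f(S_t x)f(S_t x)ᵀ/‖f(S_t x)‖²)(Df(S_t x)ᵀ + Df(S_t x))`. -/
theorem stmt15 {n : ℕ} (f : (Fin n → ℝ) → Fin n → ℝ)
    (Df : (Fin n → ℝ) → Matrix (Fin n) (Fin n) ℝ)
    (hf : ContDiff ℝ 1 f)
    (hDf : ∀ y, HasFDerivAt f (LinearMap.toContinuousLinearMap ((Df y).mulVecLin)) y)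
    (x : Fin n → ℝ)
    -- `g t = S_t x` is the forward trajectory through `x`
    (g : ℝ → Fin n → ℝ) (hg0 : g 0 = x)
    (hg : ∀ t ≥ (0:ℝ), HasDerivWithinAt g (f (g t)) (Set.Ici 0) t)
    (hfg : ∀ t ≥ (0:ℝ), f (g t) ≠ 0)
    (Atil : ℝ → Matrix (Fin n) (Fin n) ℝ)
    (hAtil : ∀ t, Atil t = Df (g t) -
      (euclNorm (f (g t)) ^ 2)⁻¹ •
        (Matrix.vecMulVec (f (g t)) (f (g t)) * ((Df (g t))ᵀ + Df (g t))))
    (φ₀ : ℝ → Fin n → ℝ) (hφ₀ : ∀ t, φ₀ t = (euclNorm (f (g t)) ^ 2)⁻¹ • f (g t)) :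
    ∀ t ≥ (0:ℝ), HasDerivWithinAt φ₀ ((Atil t).mulVec (φ₀ t)) (Set.Ici 0) t := by
  have hensq : ∀ v : Fin n → ℝ, euclNorm v ^ 2 = ∑ i, v i ^ 2 := fun v =>
    Real.sq_sqrt (Finset.sum_nonneg fun i _ => sq_nonneg _)
  set N : ℝ → ℝ := fun s => ∑ i, f (g s) i ^ 2 with hNdef
  have hφeq : φ₀ = fun s => (N s)⁻¹ • f (g s) := funext fun s => by
    rw [hφ₀, hensq]
  intro t ht
  set u : Fin n → ℝ := f (g t) with hu
  set u' : Fin n → ℝ := (Df (g t)) *ᵥ u with hu'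
  -- derivative of s ↦ f (g s)
  have hfu : HasDerivWithinAt (fun s => f (g s)) u' (Set.Ici 0) t := by
    have h := (hDf (g t)).comp_hasDerivWithinAt t (hg t ht)
    exact h
  have hcomp : ∀ i : Fin n, HasDerivWithinAt (fun s => f (g s) i) (u' i) (Set.Ici 0) t := by
    intro i
    have := ((ContinuousLinearMap.proj (R := ℝ) (φ := fun _ : Fin n => ℝ) i).hasFDerivAt).comp_hasDerivWithinAt t hfu
    exact this
  -- N is positive at t
  have hN0 : N t ≠ 0 := by
    have hne := hfg t ht
    have : 0 < N t := by
      obtain ⟨i, hi⟩ := Function.ne_iff.mp hne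
      exact Finset.sum_pos' (fun j _ => sq_nonneg _) ⟨i, Finset.mem_univ i, pow_two_pos_of_ne_zero hi⟩
    exact this.ne'
  -- derivative of N
  have hN : HasDerivWithinAt N (∑ i, 2 * f (g t) i ^ 1 * u' i) (Set.Ici 0) t := by
    exact HasDerivWithinAt.fun_sum fun i _ => (hcomp i).pow 2
  have hNinv : HasDerivWithinAt (fun s => (N s)⁻¹)
      (-(∑ i, 2 * f (g t) i ^ 1 * u' i) / N t ^ 2) (Set.Ici 0) t := hN.inv hN0
  have hs := hNinv.smul hfu
  rw [hφeq, hAtil]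
  simp only [hensq]
  convert hs using 1
  all_goals first | rfl | skip
  -- algebra
  have hBu : u ⬝ᵥ (((Df (g t))ᵀ + Df (g t)) *ᵥ u) = 2 * (u ⬝ᵥ u') := by
    rw [Matrix.add_mulVec, dotProduct_add, hu', two_mul]
    congr 1
    rw [dotProduct_mulVec, vecMul_transpose, dotProduct_comm]
  have hVw : ∀ w : Fin n → ℝ, (Matrix.vecMulVec u u) *ᵥ w = (u ⬝ᵥ w) • u := by
    intro w
    funext i
    simp [Matrix.vecMulVec, Matrix.mulVec, dotProduct, Finset.mul_sum, mul_comm, mul_left_comm]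
  rw [Matrix.mulVec_smul, Matrix.sub_mulVec, Matrix.smul_mulVec,
    ← Matrix.mulVec_mulVec, hVw, hBu]
  have hN2 : (∑ i, 2 * f (g t) i ^ 1 * u' i) = 2 * (u ⬝ᵥ u') := by
    simp [dotProduct, Finset.mul_sum, hu]
    exact Finset.sum_congr rfl fun i _ => by ring
  rw [hN2]
  funext i
  simp only [Pi.add_apply, Pi.smul_apply, Pi.sub_apply, smul_eq_mul, hu]
  rw [show (∑ x, f (g t) x ^ 2) = N t from rfl]
  field_simp
  ring
end

section
/- Let r, K, a : [0,∞) → ℝ be nonnegative locally integrable functions and let b : [0,∞) → ℝ be a nonnegative continuous function such that r(θ) ≤ a(θ) + K(θ) ∫₀^θ b(s) r(s) ds holds for almost all θ ≥ 0. Then r(θ) ≤ a(θ) + K(θ) (∫₀^θ a(s) b(s) ds) · exp(∫₀^θ K(s) b(s) ds) holds for almost all θ ≥ 0. -/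
open MeasureTheory Set

namespace Stmt18Aux

lemma ii {f : ℝ → ℝ} {T x y : ℝ} (hx : 0 ≤ x) (hxy : x ≤ y) (hy : y ≤ T)
    (hf : IntegrableOn f (Icc 0 T)) : IntervalIntegrable f volume x y := by
  apply IntegrableOn.intervalIntegrable
  rw [uIcc_of_le hxy]
  exact hf.mono_set (Icc_subset_Icc hx hy)

lemma prim_contOn {f : ℝ → ℝ} {T : ℝ} (hT : 0 ≤ T) (hf : IntegrableOn f (Icc 0 T)) :
    ContinuousOn (fun x => ∫ t in (0:ℝ)..x, f t) (Icc 0 T) := by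
  have h := intervalIntegral.continuousOn_primitive_interval
    (f := f) (a := 0) (b := T) (μ := volume) (by rwa [uIcc_of_le hT])
  rwa [uIcc_of_le hT] at h

lemma prim_mono {f : ℝ → ℝ} {T : ℝ} (hf : IntegrableOn f (Icc 0 T))
    (h0 : ∀ s ∈ Icc 0 T, 0 ≤ f s) :
    MonotoneOn (fun x => ∫ t in (0:ℝ)..x, f t) (Icc 0 T) := by
  intro x hx y hy hxy
  have h1 : IntervalIntegrable f volume 0 x := ii le_rfl hx.1 hx.2 hf
  have h2 : IntervalIntegrable f volume x y := ii hx.1 hxy hy.2 hf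
  have h3 : (∫ t in (0:ℝ)..x, f t) + ∫ t in x..y, f t = ∫ t in (0:ℝ)..y, f t :=
    intervalIntegral.integral_add_adjacent_intervals h1 h2
  have h4 : 0 ≤ ∫ t in x..y, f t :=
    intervalIntegral.integral_nonneg hxy fun s hs => h0 s ⟨hx.1.trans hs.1, hs.2.trans hy.2⟩
  simp only
  linarith

lemma prim_nonneg {f : ℝ → ℝ} {x : ℝ} (hx : 0 ≤ x) (h0 : ∀ s ∈ Icc 0 x, 0 ≤ f s) :
    0 ≤ ∫ t in (0:ℝ)..x, f t :=
  intervalIntegral.integral_nonneg hx h0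

lemma key {g : ℝ → ℝ} {c : ℝ} (hc : 0 ≤ c) (hg : IntegrableOn g (Icc 0 c))
    (hg0 : ∀ s ∈ Icc 0 c, 0 ≤ g s) :
    (∫ s in (0:ℝ)..c, g s * Real.exp (∫ t in (0:ℝ)..s, g t))
      ≤ Real.exp (∫ t in (0:ℝ)..c, g t) - 1 := by
  set G : ℝ → ℝ := fun x => ∫ t in (0:ℝ)..x, g t with hGdef
  set M : ℝ := G c with hMdef
  have hGcont : ContinuousOn G (Icc 0 c) := prim_contOn hc hg
  have hGmono : MonotoneOn G (Icc 0 c) := prim_mono hg hg0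
  have hG0 : G 0 = 0 := intervalIntegral.integral_same
  have hM0 : 0 ≤ M := prim_nonneg hc hg0
  have hexpcont : ContinuousOn (fun x => g x * Real.exp (G x)) (Icc 0 c) → True := fun _ => trivial
  -- integrability of the integrand on subintervals
  have hgeG : IntegrableOn (fun x => g x * Real.exp (G x)) (Icc 0 c) :=
    hg.mul_continuousOn (Real.continuous_exp.comp_continuousOn hGcont) isCompact_Icc
  have main : ∀ n : ℕ, 0 < n →
      (∫ s in (0:ℝ)..c, g s * Real.exp (G s)) ≤ Real.exp (M / n) * (Real.exp M - 1) := by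
    intro n hn
    have hnR : (0:ℝ) < n := Nat.cast_pos.mpr hn
    set v : ℕ → ℝ := fun i => (i : ℝ) * M / n with hvdef
    have hv0 : v 0 = 0 := by simp [hvdef]
    have hvn : v n = M := by simp only [hvdef]; field_simp
    have hvmono : ∀ i j : ℕ, i ≤ j → v i ≤ v j := by
      intro i j hij
      have hij' : (i:ℝ) ≤ j := Nat.cast_le.mpr hij
      exact (div_le_div_iff_of_pos_right hnR).mpr (mul_le_mul_of_nonneg_right hij' hM0)
    have hvIcc : ∀ i : ℕ, i ≤ n → v i ∈ Icc (0:ℝ) M := by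
      intro i hi
      constructor
      · have := hvmono 0 i (Nat.zero_le i); rw [hv0] at this; exact this
      · have := hvmono i n hi; rw [hvn] at this; exact this
    set S : ℕ → Set ℝ := fun i => {x | x ∈ Icc 0 c ∧ v i ≤ G x} with hSdef
    have hSclosed : ∀ i, IsClosed (S i) := by
      intro i
      have : S i = Icc 0 c ∩ G ⁻¹' (Ici (v i)) := by
        ext x; simp [hSdef, mem_preimage, and_comm]
      rw [this]
      exact hGcont.preimage_isClosed_of_isClosed isClosed_Icc isClosed_Ici
    have hSne : ∀ i, i ≤ n → (S i).Nonempty := by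
      intro i hi
      exact ⟨c, ⟨right_mem_Icc.mpr hc, (hvIcc i hi).2⟩⟩
    have hSbdd : ∀ i, BddBelow (S i) := fun i => ⟨0, fun x hx => hx.1.1⟩
    set p : ℕ → ℝ := fun i => sInf (S i) with hpdef
    have hpmem : ∀ i, i ≤ n → p i ∈ S i := fun i hi =>
      (hSclosed i).csInf_mem (hSne i hi) (hSbdd i)
    have hpIcc : ∀ i, i ≤ n → p i ∈ Icc 0 c := fun i hi => (hpmem i hi).1
    have hpG : ∀ i, i ≤ n → G (p i) = v i := by
      intro i hi
      have h1 : v i ≤ G (p i) := (hpmem i hi).2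
      obtain ⟨x, hxmem, hxval⟩ := intermediate_value_Icc hc hGcont
        (by rw [hG0]; exact hvIcc i hi)
      have hx : x ∈ S i := ⟨hxmem, hxval.ge⟩
      have hpx : p i ≤ x := csInf_le (hSbdd i) hx
      have h2 : G (p i) ≤ v i := by
        calc G (p i) ≤ G x := hGmono (hpIcc i hi) hxmem hpx
        _ = v i := hxval
      linarith
    have hpmono : ∀ i j : ℕ, i ≤ j → j ≤ n → p i ≤ p j := by
      intro i j hij hj
      apply csInf_le_csInf (hSbdd i) (hSne j hj)
      intro x hx
      exact ⟨hx.1, (hvmono i j hij).trans hx.2⟩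
    have hp0 : p 0 = 0 := by
      apply le_antisymm
      · apply csInf_le (hSbdd 0)
        refine ⟨left_mem_Icc.mpr hc, ?_⟩
        rw [hv0, hG0]
      · exact (hpmem 0 (Nat.zero_le n)).1.1
    -- integrability on pieces
    have hpieceInt : ∀ (x y : ℝ), 0 ≤ x → x ≤ y → y ≤ c →
        IntervalIntegrable (fun s => g s * Real.exp (G s)) volume x y := by
      intro x y hx hxy hy
      exact ii hx hxy hy hgeG
    -- sum decomposition
    have hsum : (∑ k ∈ Finset.range n, ∫ s in (p k)..(p (k+1)), g s * Real.exp (G s))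
        = ∫ s in (p 0)..(p n), g s * Real.exp (G s) := by
      apply intervalIntegral.sum_integral_adjacent_intervals
      intro k hk
      exact hpieceInt _ _ (hpIcc k (Nat.le_of_lt hk)).1
        (hpmono k (k+1) (Nat.le_succ k) hk) (hpIcc (k+1) hk).2
    have hsplit : (∫ s in (p 0)..(p n), g s * Real.exp (G s))
        + (∫ s in (p n)..c, g s * Real.exp (G s))
        = ∫ s in (p 0)..c, g s * Real.exp (G s) := by
      apply intervalIntegral.integral_add_adjacent_intervals
      · exact hpieceInt _ _ (hpIcc 0 (Nat.zero_le n)).1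
          (hpmono 0 n (Nat.zero_le n) le_rfl) (hpIcc n le_rfl).2
      · exact hpieceInt _ _ (hpIcc n le_rfl).1 (hpIcc n le_rfl).2 le_rfl
    -- integral of g over a piece
    have hgpiece : ∀ (x y : ℝ), 0 ≤ x → x ≤ y → y ≤ c →
        (∫ s in x..y, g s) = G y - G x := by
      intro x y hx hxy hy
      have := intervalIntegral.integral_add_adjacent_intervals
        (ii le_rfl hx (hxy.trans hy) hg) (ii hx hxy hy hg)
      simp only [hGdef]
      linarith [this]
    -- bound each piece
    have hpiece : ∀ k, k < n →
        (∫ s in (p k)..(p (k+1)), g s * Real.exp (G s))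
          ≤ Real.exp (M / n) * (Real.exp (v (k+1)) - Real.exp (v k)) := by
      intro k hk
      have hk1 : k + 1 ≤ n := hk
      have hkn : k ≤ n := Nat.le_of_lt hk
      have hpk := hpIcc k hkn
      have hpk1 := hpIcc (k+1) hk1
      have hple : p k ≤ p (k+1) := hpmono k (k+1) (Nat.le_succ k) hk1
      have step1 : (∫ s in (p k)..(p (k+1)), g s * Real.exp (G s))
          ≤ ∫ s in (p k)..(p (k+1)), g s * Real.exp (v (k+1)) := by
        apply intervalIntegral.integral_mono_on hple
          (hpieceInt _ _ hpk.1 hple hpk1.2)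
          ((ii hpk.1 hple hpk1.2 hg).mul_const _)
        intro s hs
        have hsIcc : s ∈ Icc 0 c := ⟨hpk.1.trans hs.1, hs.2.trans hpk1.2⟩
        have hGs : G s ≤ v (k+1) := by
          rw [← hpG (k+1) hk1]
          exact hGmono hsIcc hpk1 hs.2
        exact mul_le_mul_of_nonneg_left (Real.exp_le_exp.mpr hGs) (hg0 s hsIcc)
      have step2 : (∫ s in (p k)..(p (k+1)), g s * Real.exp (v (k+1)))
          = (v (k+1) - v k) * Real.exp (v (k+1)) := by
        rw [intervalIntegral.integral_mul_const, hgpiece _ _ hpk.1 hple hpk1.2,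
          hpG k hkn, hpG (k+1) hk1]
      have hvdiff : v (k+1) - v k = M / n := by
        simp only [hvdef]
        push_cast
        ring
      have step3 : (v (k+1) - v k) * Real.exp (v (k+1))
          ≤ Real.exp (M / n) * (Real.exp (v (k+1)) - Real.exp (v k)) := by
        rw [hvdiff]
        have hvk1 : v (k+1) = v k + M / n := by linarith [hvdiff]
        rw [hvk1, Real.exp_add]
        have h1 : M / n + 1 ≤ Real.exp (M / n) := Real.add_one_le_exp _
        have h2 : 0 < Real.exp (v k) := Real.exp_pos _
        have h3 : 0 < Real.exp (M / n) := Real.exp_pos _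
        have hMn : 0 ≤ M / n := div_nonneg hM0 hnR.le
        have h4 : 0 ≤ Real.exp (v k) * Real.exp (M / n) * (Real.exp (M / n) - 1 - M / n) := by
          apply mul_nonneg (mul_pos h2 h3).le
          linarith
        nlinarith
      linarith [step1, step2 ▸ step1, step3]
    -- tail bound
    have htail : (∫ s in (p n)..c, g s * Real.exp (G s)) ≤ 0 := by
      have hpn := hpIcc n le_rfl
      have step1 : (∫ s in (p n)..c, g s * Real.exp (G s))
          ≤ ∫ s in (p n)..c, g s * Real.exp M := by
        apply intervalIntegral.integral_mono_on hpn.2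
          (hpieceInt _ _ hpn.1 hpn.2 le_rfl)
          ((ii hpn.1 hpn.2 le_rfl hg).mul_const _)
        intro s hs
        have hsIcc : s ∈ Icc 0 c := ⟨hpn.1.trans hs.1, hs.2⟩
        have hGs : G s ≤ M := hGmono hsIcc (right_mem_Icc.mpr hc) hs.2
        exact mul_le_mul_of_nonneg_left (Real.exp_le_exp.mpr hGs) (hg0 s hsIcc)
      have step2 : (∫ s in (p n)..c, g s * Real.exp M) = (M - v n) * Real.exp M := by
        rw [intervalIntegral.integral_mul_const, hgpiece _ _ hpn.1 hpn.2 le_rfl, hpG n le_rfl]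
      rw [step2, hvn] at step1
      simpa using step1
    -- combine
    have hsumbound : (∑ k ∈ Finset.range n, ∫ s in (p k)..(p (k+1)), g s * Real.exp (G s))
        ≤ Real.exp (M / n) * (Real.exp M - 1) := by
      calc (∑ k ∈ Finset.range n, ∫ s in (p k)..(p (k+1)), g s * Real.exp (G s))
          ≤ ∑ k ∈ Finset.range n, Real.exp (M / n) * (Real.exp (v (k+1)) - Real.exp (v k)) :=
            Finset.sum_le_sum fun k hk => hpiece k (Finset.mem_range.mp hk)
        _ = Real.exp (M / n) * ∑ k ∈ Finset.range n, (Real.exp (v (k+1)) - Real.exp (v k)) := by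
            rw [Finset.mul_sum]
        _ = Real.exp (M / n) * (Real.exp (v n) - Real.exp (v 0)) := by
            rw [Finset.sum_range_sub (fun k => Real.exp (v k))]
        _ = Real.exp (M / n) * (Real.exp M - 1) := by rw [hvn, hv0, Real.exp_zero]
    have : (∫ s in (0:ℝ)..c, g s * Real.exp (G s))
        = (∑ k ∈ Finset.range n, ∫ s in (p k)..(p (k+1)), g s * Real.exp (G s))
          + (∫ s in (p n)..c, g s * Real.exp (G s)) := by
      rw [hsum, hsplit, hp0]
    rw [this]
    linarith
  -- take the limit n → ∞
  have hlim : Filter.Tendsto (fun n : ℕ => Real.exp (M / n) * (Real.exp M - 1))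
      Filter.atTop (nhds (Real.exp M - 1)) := by
    have h1 : Filter.Tendsto (fun n : ℕ => M / n) Filter.atTop (nhds 0) :=
      tendsto_const_div_atTop_nhds_zero_nat M
    have h2 : Filter.Tendsto (fun n : ℕ => Real.exp (M / n)) Filter.atTop (nhds 1) := by
      have := (Real.continuous_exp.tendsto 0).comp h1
      simpa [Function.comp_def] using this
    have := h2.mul_const (Real.exp M - 1)
    simpa using this
  apply ge_of_tendsto hlim
  filter_upwards [Filter.eventually_gt_atTop 0] with n hn
  exact main n hn

lemma gron {u v w : ℝ → ℝ} {T : ℝ} (hT : 0 ≤ T)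
    (hu : IntegrableOn u (Icc 0 T)) (hv : IntegrableOn v (Icc 0 T))
    (hw : IntegrableOn w (Icc 0 T))
    (hu0 : ∀ s ∈ Icc 0 T, 0 ≤ u s) (hv0 : ∀ s ∈ Icc 0 T, 0 ≤ v s)
    (h : ∀ᵐ s ∂volume, s ∈ Icc 0 T → w s ≤ u s + v s * ∫ t in (0:ℝ)..s, w t) :
    (∫ t in (0:ℝ)..T, w t)
      ≤ (∫ t in (0:ℝ)..T, u t) * Real.exp (∫ t in (0:ℝ)..T, v t) := by
  set W : ℝ → ℝ := fun x => ∫ t in (0:ℝ)..x, w t with hWdef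
  set U : ℝ → ℝ := fun x => ∫ t in (0:ℝ)..x, u t with hUdef
  set V : ℝ → ℝ := fun x => ∫ t in (0:ℝ)..x, v t with hVdef
  have hWcont : ContinuousOn W (Icc 0 T) := prim_contOn hT hw
  have hUcont : ContinuousOn U (Icc 0 T) := prim_contOn hT hu
  have hVcont : ContinuousOn V (Icc 0 T) := prim_contOn hT hv
  have hUmono : MonotoneOn U (Icc 0 T) := prim_mono hu hu0
  have claim : ∀ ε > (0:ℝ), W T ≤ (U T + ε) * Real.exp (V T) := by
    intro ε hε
    by_contra hcon
    push_neg at hcon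
    set Q : Set ℝ := {θ | θ ∈ Icc 0 T ∧ (U θ + ε) * Real.exp (V θ) ≤ W θ} with hQdef
    have hQne : Q.Nonempty := ⟨T, right_mem_Icc.mpr hT, hcon.le⟩
    have hQclosed : IsClosed Q := by
      have : Q = Icc 0 T ∩ (fun θ => W θ - (U θ + ε) * Real.exp (V θ)) ⁻¹' (Ici 0) := by
        ext x
        simp only [hQdef, mem_setOf_eq, mem_inter_iff, mem_preimage, mem_Ici, sub_nonneg]
      rw [this]
      exact (hWcont.sub (((hUcont.add continuousOn_const)).mul
        (Real.continuous_exp.comp_continuousOn hVcont))).preimage_isClosed_of_isClosed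
        isClosed_Icc isClosed_Ici
    have hQbdd : BddBelow Q := ⟨0, fun x hx => hx.1.1⟩
    set c : ℝ := sInf Q with hcdef
    have hcQ : c ∈ Q := hQclosed.csInf_mem hQne hQbdd
    have hc0 : 0 ≤ c := hcQ.1.1
    have hcT : c ≤ T := hcQ.1.2
    have hW0 : W 0 = 0 := intervalIntegral.integral_same
    have hU0 : U 0 = 0 := intervalIntegral.integral_same
    have hV0 : V 0 = 0 := intervalIntegral.integral_same
    have hcpos : 0 < c := by
      rcases hc0.lt_or_eq with h' | h'
      · exact h'
      · exfalso
        have := hcQ.2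
        rw [← h', hW0, hU0, hV0, Real.exp_zero] at this
        linarith
    have hbefore : ∀ s ∈ Ico (0:ℝ) c, W s ≤ (U s + ε) * Real.exp (V s) := by
      intro s hs
      by_contra hcon2
      push_neg at hcon2
      have hsQ : s ∈ Q := ⟨⟨hs.1, hs.2.le.trans hcT⟩, hcon2.le⟩
      exact absurd (csInf_le hQbdd hsQ) (not_le.mpr hs.2)
    -- now the chain of inequalities at c
    have hiw : IntervalIntegrable w volume 0 c := ii le_rfl hc0 hcT hw
    have hiu : IntervalIntegrable u volume 0 c := ii le_rfl hc0 hcT hu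
    have hiv : IntervalIntegrable v volume 0 c := ii le_rfl hc0 hcT hv
    have hWcontc : ContinuousOn W (uIcc 0 c) := by
      rw [uIcc_of_le hc0]; exact hWcont.mono (Icc_subset_Icc le_rfl hcT)
    have hVcontc : ContinuousOn (fun s => Real.exp (V s)) (uIcc 0 c) := by
      rw [uIcc_of_le hc0]
      exact Real.continuous_exp.comp_continuousOn (hVcont.mono (Icc_subset_Icc le_rfl hcT))
    have hivW : IntervalIntegrable (fun s => v s * W s) volume 0 c := hiv.mul_continuousOn hWcontc
    have hivE : IntervalIntegrable (fun s => v s * ((U c + ε) * Real.exp (V s))) volume 0 c := by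
      have h0 := (hiv.mul_continuousOn hVcontc).const_mul (U c + ε)
      simpa only [mul_left_comm] using h0
    have hUc0 : 0 ≤ U c := prim_nonneg hc0 fun s hs => hu0 s ⟨hs.1, hs.2.trans hcT⟩
    have step1 : W c ≤ ∫ s in (0:ℝ)..c, (u s + v s * W s) := by
      apply intervalIntegral.integral_mono_ae_restrict hc0 hiw (hiu.add hivW)
      filter_upwards [ae_restrict_of_ae h, ae_restrict_mem measurableSet_Icc] with s hs hsmem
      exact hs ⟨hsmem.1, hsmem.2.trans hcT⟩
    have step1' : (∫ s in (0:ℝ)..c, (u s + v s * W s))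
        = U c + ∫ s in (0:ℝ)..c, v s * W s :=
      intervalIntegral.integral_add hiu hivW
    have hnec : ∀ᵐ s ∂(volume.restrict (Icc (0:ℝ) c)), s ≠ c := by
      apply ae_restrict_of_ae
      have hset : {s : ℝ | ¬ s ≠ c} = {c} := by ext x; simp
      rw [ae_iff, hset]
      exact measure_singleton c
    have step2 : (∫ s in (0:ℝ)..c, v s * W s)
        ≤ ∫ s in (0:ℝ)..c, v s * ((U c + ε) * Real.exp (V s)) := by
      apply intervalIntegral.integral_mono_ae_restrict hc0 hivW hivE
      filter_upwards [ae_restrict_mem measurableSet_Icc, hnec] with s hsmem hsne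
      have hsc : s < c := lt_of_le_of_ne hsmem.2 hsne
      have hsT : s ∈ Icc 0 T := ⟨hsmem.1, hsmem.2.trans hcT⟩
      have h1 : W s ≤ (U s + ε) * Real.exp (V s) := hbefore s ⟨hsmem.1, hsc⟩
      have h2 : U s ≤ U c := hUmono hsT ⟨hc0, hcT⟩ hsmem.2
      have h3 : W s ≤ (U c + ε) * Real.exp (V s) := by
        apply h1.trans
        exact mul_le_mul_of_nonneg_right (by linarith) (Real.exp_pos _).le
      exact mul_le_mul_of_nonneg_left h3 (hv0 s hsT)
    have step3 : (∫ s in (0:ℝ)..c, v s * ((U c + ε) * Real.exp (V s)))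
        = (U c + ε) * ∫ s in (0:ℝ)..c, v s * Real.exp (V s) := by
      rw [show (fun s => v s * ((U c + ε) * Real.exp (V s)))
          = fun s => (U c + ε) * (v s * Real.exp (V s)) from funext fun s => by ring]
      exact intervalIntegral.integral_const_mul _ _
    have step4 : (∫ s in (0:ℝ)..c, v s * Real.exp (V s)) ≤ Real.exp (V c) - 1 :=
      key hc0 (hv.mono_set (Icc_subset_Icc le_rfl hcT))
        (fun s hs => hv0 s ⟨hs.1, hs.2.trans hcT⟩)
    have step5 : (U c + ε) * (∫ s in (0:ℝ)..c, v s * Real.exp (V s))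
        ≤ (U c + ε) * (Real.exp (V c) - 1) :=
      mul_le_mul_of_nonneg_left step4 (by linarith)
    have hfinal : W c ≤ (U c + ε) * Real.exp (V c) - ε := by
      have := hcQ.2
      calc W c ≤ U c + ∫ s in (0:ℝ)..c, v s * W s := by rw [← step1']; exact step1
        _ ≤ U c + (U c + ε) * (Real.exp (V c) - 1) := by
            rw [step3] at step2
            linarith [step2.trans step5]
        _ = (U c + ε) * Real.exp (V c) - ε := by ring
    linarith [hcQ.2]
  apply le_of_forall_pos_le_add
  intro δ hδ
  have hE : 0 < Real.exp (V T) := Real.exp_pos _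
  have hcl := claim (δ / Real.exp (V T)) (div_pos hδ hE)
  rw [add_mul, div_mul_cancel₀ _ hE.ne'] at hcl
  exact hcl

end Stmt18Aux

open Stmt18Aux in
/-- generalized Gronwall inequality, Lemma A.1: if `r, K, a` are
nonnegative locally integrable functions on `[0,∞)`, `b` is nonnegative and continuous, and
`r(θ) ≤ a(θ) + K(θ) ∫₀^θ b(s) r(s) ds` for almost all `θ ≥ 0`, then
`r(θ) ≤ a(θ) + K(θ) (∫₀^θ a(s) b(s) ds) exp(∫₀^θ K(s) b(s) ds)` for almost all `θ ≥ 0`. -/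
theorem stmt18 (r K a b : ℝ → ℝ)
    (hr0 : ∀ θ ≥ (0:ℝ), 0 ≤ r θ)
    (hK0 : ∀ θ ≥ (0:ℝ), 0 ≤ K θ)
    (ha0 : ∀ θ ≥ (0:ℝ), 0 ≤ a θ)
    (hb0 : ∀ θ ≥ (0:ℝ), 0 ≤ b θ)
    (hrloc : ∀ T ≥ (0:ℝ), IntegrableOn r (Set.Icc 0 T))
    (hKloc : ∀ T ≥ (0:ℝ), IntegrableOn K (Set.Icc 0 T))
    (haloc : ∀ T ≥ (0:ℝ), IntegrableOn a (Set.Icc 0 T))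
    (hbc : ContinuousOn b (Set.Ici 0))
    (hineq : ∀ᵐ θ ∂volume, 0 ≤ θ → r θ ≤ a θ + K θ * ∫ s in (0:ℝ)..θ, b s * r s) :
    ∀ᵐ θ ∂volume, 0 ≤ θ →
      r θ ≤ a θ + K θ * (∫ s in (0:ℝ)..θ, a s * b s) *
        Real.exp (∫ s in (0:ℝ)..θ, K s * b s) := by
  have hbIcc : ∀ T ≥ (0:ℝ), ContinuousOn b (Set.Icc 0 T) :=
    fun T _ => hbc.mono (fun x hx => hx.1)
  have hu : ∀ T ≥ (0:ℝ), IntegrableOn (fun s => a s * b s) (Set.Icc 0 T) :=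
    fun T hT => (haloc T hT).mul_continuousOn (hbIcc T hT) isCompact_Icc
  have hv : ∀ T ≥ (0:ℝ), IntegrableOn (fun s => K s * b s) (Set.Icc 0 T) :=
    fun T hT => (hKloc T hT).mul_continuousOn (hbIcc T hT) isCompact_Icc
  have hw : ∀ T ≥ (0:ℝ), IntegrableOn (fun s => b s * r s) (Set.Icc 0 T) :=
    fun T hT => (hrloc T hT).continuousOn_mul (hbIcc T hT) isCompact_Icc
  have h' : ∀ᵐ s ∂volume, 0 ≤ s →
      b s * r s ≤ a s * b s + (K s * b s) * ∫ t in (0:ℝ)..s, b t * r t := by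
    filter_upwards [hineq] with s hs h0
    have h1 : b s * r s ≤ b s * (a s + K s * ∫ t in (0:ℝ)..s, b t * r t) :=
      mul_le_mul_of_nonneg_left (hs h0) (hb0 s h0)
    calc b s * r s ≤ b s * (a s + K s * ∫ t in (0:ℝ)..s, b t * r t) := h1
      _ = a s * b s + (K s * b s) * ∫ t in (0:ℝ)..s, b t * r t := by ring
  have main : ∀ θ ≥ (0:ℝ), (∫ t in (0:ℝ)..θ, b t * r t)
      ≤ (∫ t in (0:ℝ)..θ, a t * b t) * Real.exp (∫ t in (0:ℝ)..θ, K t * b t) := by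
    intro θ hθ
    apply gron hθ (hu θ hθ) (hv θ hθ) (hw θ hθ)
      (fun s hs => mul_nonneg (ha0 s hs.1) (hb0 s hs.1))
      (fun s hs => mul_nonneg (hK0 s hs.1) (hb0 s hs.1))
    filter_upwards [h'] with s hs hsmem
    exact hs hsmem.1
  filter_upwards [hineq] with θ hθ h0
  have h1 : r θ ≤ a θ + K θ * ∫ s in (0:ℝ)..θ, b s * r s := hθ h0
  have h2 : K θ * (∫ s in (0:ℝ)..θ, b s * r s)
      ≤ K θ * ((∫ s in (0:ℝ)..θ, a s * b s) * Real.exp (∫ s in (0:ℝ)..θ, K s * b s)) :=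
    mul_le_mul_of_nonneg_left (main θ h0) (hK0 θ h0)
  calc r θ ≤ a θ + K θ * ∫ s in (0:ℝ)..θ, b s * r s := h1
    _ ≤ a θ + K θ * ((∫ s in (0:ℝ)..θ, a s * b s)
          * Real.exp (∫ s in (0:ℝ)..θ, K s * b s)) := by linarith
    _ = a θ + K θ * (∫ s in (0:ℝ)..θ, a s * b s)
          * Real.exp (∫ s in (0:ℝ)..θ, K s * b s) := by ring
end
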